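/- arXiv:1302.4190 — 3 statements merged into one kernel-verified Lean document; each statement's English description precedes it below -/
import Mathlib

section
/- Let G be a regular T1 countable paratopological group which is locally kω (every point has a neighborhood which, as a subspace, is a kω-space). Then either G is a discrete topological group (in particular the inverse operation is continuous), or G contains a closed subspace homeomorphic to Sω. -/
open Topology

/-- `X` is a `kω`-space: there are countably many compact spaces `K n` and a quotient
map from their topological sum onto `X`. -/
def IsKOmegaSpace (X : Type*) [TopologicalSpace X] : Prop :=
  ∃ (K : ℕ → Type) (tK : ∀ n, TopologicalSpace (K n)),
    (∀ n, @CompactSpace (K n) (tK n)) ∧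
    ∃ f : (Σ n, K n) → X,
      @IsQuotientMap _ _ (@instTopologicalSpaceSigma ℕ K tK) _ f

/-- The setoid on `ℕ × (ℕ ∪ {∞})` identifying all points `(n, ∞)`. -/
def SOmegaSetoid : Setoid (ℕ × OnePoint ℕ) where
  r p q := p = q ∨ (p.2 = OnePoint.infty ∧ q.2 = OnePoint.infty)
  iseqv := by
    constructor
    · intro p
      exact Or.inl rfl
    · rintro p q (rfl | ⟨h1, h2⟩)
      · exact Or.inl rfl
      · exact Or.inr ⟨h2, h1⟩
    · rintro p q r (rfl | ⟨h1, h2⟩) (rfl | ⟨h3, h4⟩)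
      · exact Or.inl rfl
      · exact Or.inr ⟨h3, h4⟩
      · exact Or.inr ⟨h1, h2⟩
      · exact Or.inr ⟨h1, h4⟩

/-- The sequential fan `Sω`: the quotient of the topological sum of countably many
convergent sequences `ℕ × (ℕ ∪ {∞})` obtained by identifying all limit points
`(n, ∞)` to a single point, with the quotient topology. -/
def SOmega : Type := Quotient SOmegaSetoid

instance : TopologicalSpace SOmega := instTopologicalSpaceQuotient


open Filter Set
open scoped Classical
set_option linter.unusedSectionVars false
set_option linter.unusedVariables false
set_option maxHeartbeats 1000000

section Aux
variable {G : Type} [Group G] [TopologicalSpace G] [ContinuousMul G]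
  [RegularSpace G] [T1Space G] [Countable G]

/-- Relative first countability at a point with respect to a compact subset of a
countable regular T1 space. -/
theorem relFC (T : Set G) (hT : IsCompact T) (x : G) :
    ∃ N : ℕ → Set G, (∀ r, N r ∈ 𝓝 x) ∧ Antitone N ∧ ∀ O ∈ 𝓝 x, ∃ r, N r ∩ T ⊆ O := by
  obtain ⟨en, hen⟩ := exists_surjective_nat G
  set R : ℕ → Set G := fun n => if en n = x then univ else {en n}ᶜ with hR
  have hUopen : ∀ n, IsOpen (R n) := by
    intro n; by_cases h : en n = x <;> simp only [hR, h, if_true, if_false]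
    · exact isOpen_univ
    · exact isOpen_compl_singleton
  have hUx : ∀ n, x ∈ R n := by
    intro n; by_cases h : en n = x <;> simp [hR, h]
    exact fun hh => h hh.symm
  have hUint : ∀ z, (∀ n, z ∈ R n) → z = x := by
    intro z hz
    by_contra hzx
    obtain ⟨n, rfl⟩ := hen z
    have h1 := hz n
    rw [hR] at h1
    simp only [if_neg hzx] at h1
    exact h1 rfl
  have step : ∀ (V : Set G), IsOpen V → x ∈ V → ∀ n,
      ∃ W : Set G, IsOpen W ∧ x ∈ W ∧ closure W ⊆ V ∩ R n := by
    intro V hVo hVx n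
    have hmem : V ∩ R n ∈ 𝓝 x := (hVo.inter (hUopen n)).mem_nhds ⟨hVx, hUx n⟩
    obtain ⟨F, ⟨hF, hFc⟩, hFsub⟩ := ((closed_nhds_basis x).mem_iff.mp hmem)
    exact ⟨interior F, isOpen_interior, mem_interior_iff_mem_nhds.mpr hF,
      (closure_minimal interior_subset hFc).trans hFsub⟩
  choose W hWo hWx hWsub using step
  let V : ℕ → {V : Set G // IsOpen V ∧ x ∈ V} := fun n =>
    Nat.rec ⟨univ, isOpen_univ, mem_univ x⟩
      (fun n p => ⟨W p.1 p.2.1 p.2.2 n, hWo _ _ _ n, hWx _ _ _ n⟩) n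
  have hVsub : ∀ n, closure (V (n+1)).1 ⊆ (V n).1 ∩ R n := fun n => hWsub _ _ _ n
  refine ⟨fun n => (V n).1, fun n => ((V n).2.1).mem_nhds (V n).2.2, ?_, ?_⟩
  · apply antitone_nat_of_succ_le
    intro n
    exact (subset_closure).trans ((hVsub n).trans inter_subset_left)
  · intro O hO
    by_contra hc
    push_neg at hc
    have hy : ∀ r, ∃ y, y ∈ (T ∩ closure (V r).1) \ interior O := by
      intro r
      obtain ⟨y, hy1, hy2⟩ := not_subset.mp (hc r)
      exact ⟨y, ⟨⟨hy1.2, subset_closure hy1.1⟩, fun h => hy2 (interior_subset h)⟩⟩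
    set F : ℕ → Set G := fun n => (T ∩ closure (V n).1) \ interior O with hF
    have hFc : ∀ n, IsClosed (F n) := fun n =>
      (hT.isClosed.inter isClosed_closure).sdiff isOpen_interior
    have hFne : ∀ n, (F n).Nonempty := hy
    have hFdec : ∀ n, F (n+1) ⊆ F n := by
      intro n z hz
      exact ⟨⟨hz.1.1, subset_closure ((hVsub n) hz.1.2).1⟩, hz.2⟩
    have hF0 : IsCompact (F 0) :=
      (hT.inter_right isClosed_closure).of_isClosed_subset (hFc 0) diff_subset
    obtain ⟨z, hz⟩ :=
      IsCompact.nonempty_iInter_of_sequence_nonempty_isCompact_isClosed F hFdec hFne hF0 hFc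
    simp only [mem_iInter] at hz
    have hzx : z = x := by
      apply hUint
      intro n
      exact ((hVsub n) (hz (n+1)).1.2).2
    have : x ∈ interior O := mem_interior_iff_mem_nhds.mpr hO
    exact (hz 0).2 (hzx ▸ this)


theorem det_seq_closed (D : ℕ → Set G) (hDcomp : ∀ m, IsCompact (D m))
    (hDdet : ∀ A : Set G, (∀ m, IsClosed (A ∩ D m)) → IsClosed A)
    (relFC : ∀ (T : Set G), IsCompact T → ∀ x : G,
      ∃ N : ℕ → Set G, (∀ r, N r ∈ 𝓝 x) ∧ Antitone N ∧ ∀ O ∈ 𝓝 x, ∃ r, N r ∩ T ⊆ O)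
    (A : Set G)
    (hseq : ∀ (u : ℕ → G) (g : G), (∀ k, u k ∈ A) → Tendsto u atTop (𝓝 g) → g ∈ A) :
    IsClosed A := by
  apply hDdet
  intro m
  rw [← closure_subset_iff_isClosed]
  intro g hg
  have hgD : g ∈ D m := (closure_minimal inter_subset_right (hDcomp m).isClosed) hg
  obtain ⟨N, hN, hNanti, hNbase⟩ := relFC (D m) (hDcomp m) g
  have hpick : ∀ r, ∃ y, y ∈ N r ∩ (A ∩ D m) := fun r =>
    mem_closure_iff_nhds.mp hg (N r) (hN r)
  choose u hu using hpick
  have hmem : ∀ r, u r ∈ A := fun r => (hu r).2.1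
  have hten : Tendsto u atTop (𝓝 g) := by
    rw [tendsto_def]
    intro s hs
    obtain ⟨r, hr⟩ := hNbase s hs
    rw [mem_atTop_sets]
    exact ⟨r, fun r' hr' => hr ⟨hNanti hr' (hu r').1, (hu r').2.2⟩⟩
  exact ⟨hseq u g hmem hten, hgD⟩

theorem det_compact_subset (D : ℕ → Set G) (hDmono : Monotone D)
    (hDcover : ∀ g : G, ∃ m, g ∈ D m)
    (hDdet : ∀ A : Set G, (∀ m, IsClosed (A ∩ D m)) → IsClosed A)
    {K : Set G} (hK : IsCompact K) : ∃ m, K ⊆ D m := by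
  by_contra hc
  push_neg at hc
  have hz : ∀ m, ∃ z, z ∈ K ∧ z ∉ D m := fun m => not_subset.mp (hc m)
  choose z hzK hzD using hz
  haveI : NeBot (map z atTop) := map_neBot
  have hle : map z atTop ≤ 𝓟 K := le_principal_iff.mpr (mem_map.mpr (Eventually.of_forall hzK))
  obtain ⟨p, hpK, hp⟩ := hK.exists_clusterPt hle
  obtain ⟨m₀, hpD⟩ := hDcover p
  set S : Set G := (z '' {j | m₀ ≤ j}) \ {p} with hS
  have hScl : IsClosed S := by
    apply hDdet
    intro mm
    have hfin : (S ∩ D mm).Finite := by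
      apply ((finite_Iio mm).image z).subset
      rintro y ⟨⟨⟨j, hj, rfl⟩, hyp⟩, hyD⟩
      refine ⟨j, ?_, rfl⟩
      by_contra hjge
      exact hzD j (hDmono (le_of_not_gt hjge) hyD)
    exact hfin.isClosed
  have hpS : p ∉ S := fun h => h.2 rfl
  have hmem : Sᶜ ∈ 𝓝 p := hScl.isOpen_compl.mem_nhds hpS
  have hV : z '' {j | m₀ ≤ j} ∈ map z atTop := by
    rw [mem_map]
    filter_upwards [eventually_ge_atTop m₀] with j hj
    exact ⟨j, hj, rfl⟩
  obtain ⟨y, hy1, hy2⟩ := clusterPt_iff_nonempty.mp hp hmem hV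
  obtain ⟨j, hj, rfl⟩ := hy2
  have : z j = p := by
    by_contra hne
    exact hy1 ⟨⟨j, hj, rfl⟩, hne⟩
  exact hzD j (hDmono hj (this ▸ hpD))

theorem discrete_of_isolated (x : G) (hx : IsOpen ({x} : Set G)) :
    DiscreteTopology G ∧ IsTopologicalGroup G := by
  have hall : ∀ y : G, IsOpen ({y} : Set G) := by
    intro y
    have hcont : Continuous (fun z : G => x * y⁻¹ * z) := continuous_const.mul continuous_id
    have hpre : (fun z : G => x * y⁻¹ * z) ⁻¹' {x} = {y} := by
      ext z
      simp only [mem_preimage, mem_singleton_iff]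
      constructor
      · intro h
        have h2 : x * y⁻¹ * z = x * y⁻¹ * y := by
          rw [h, inv_mul_cancel_right]
        exact mul_left_cancel h2
      · rintro rfl
        exact inv_mul_cancel_right _ _
    rw [← hpre]
    exact hx.preimage hcont
  haveI hD : DiscreteTopology G := discreteTopology_iff_isOpen_singleton.mpr hall
  exact ⟨hD, { continuous_inv := continuous_of_discreteTopology }⟩

theorem det_aux {H : Type} [TopologicalSpace H] [T2Space H] (U : Set H) (K : ℕ → Type)
    (tK : ∀ n, TopologicalSpace (K n)) (f : (Σ n, K n) → ↥U)
    (hqf : @IsQuotientMap _ _ (@instTopologicalSpaceSigma ℕ K tK) _ f) (A : Set H)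
    (hA : ∀ n, IsClosed (A ∩ (Subtype.val '' (f '' (Set.range (@Sigma.mk ℕ K n)))))) :
    ∃ Cl : Set H, IsClosed Cl ∧ Cl ∩ U = A ∩ U := by
  letI := @instTopologicalSpaceSigma ℕ K tK
  have hS : IsClosed (Subtype.val ⁻¹' A : Set ↥U) := by
    rw [← hqf.isClosed_preimage]
    rw [isClosed_sigma_iff]
    intro n
    have hcont : Continuous (fun k : K n => (f ⟨n, k⟩ : H)) :=
      continuous_subtype_val.comp (hqf.continuous.comp continuous_sigmaMk)
    have heq : (Sigma.mk n ⁻¹' (f ⁻¹' (Subtype.val ⁻¹' A)))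
        = (fun k : K n => (f ⟨n, k⟩ : H)) ⁻¹'
          (A ∩ (Subtype.val '' (f '' (Set.range (@Sigma.mk ℕ K n))))) := by
      ext k
      simp only [mem_preimage, mem_inter_iff]
      exact ⟨fun h => ⟨h, ⟨f ⟨n,k⟩, ⟨⟨n,k⟩, ⟨k, rfl⟩, rfl⟩, rfl⟩⟩, fun h => h.1⟩
    rw [heq]
    exact (hA n).preimage hcont
  obtain ⟨t, htc, hts⟩ := isClosed_induced_iff.mp hS
  refine ⟨t, htc, ?_⟩
  ext y
  constructor
  · rintro ⟨hyt, hyU⟩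
    have : (⟨y, hyU⟩ : ↥U) ∈ Subtype.val ⁻¹' t := hyt
    rw [hts] at this
    exact ⟨this, hyU⟩
  · rintro ⟨hyA, hyU⟩
    have : (⟨y, hyU⟩ : ↥U) ∈ Subtype.val ⁻¹' A := hyA
    rw [← hts] at this
    exact ⟨this, hyU⟩


theorem isolated_of_compact_nhds {Km : Set G} (hK : IsCompact Km) (hmem : Km ∈ 𝓝 (1:G)) :
    ∃ w : G, IsOpen ({w} : Set G) := by
  set L : Set G := closure (interior Km) with hL
  have hLK : L ⊆ Km := closure_minimal interior_subset hK.isClosed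
  have hLcomp : IsCompact L := hK.of_isClosed_subset isClosed_closure hLK
  haveI : CompactSpace ↥L := isCompact_iff_compactSpace.mp hLcomp
  haveI : Nonempty ↥L := ⟨⟨1, subset_closure (mem_interior_iff_mem_nhds.mpr hmem)⟩⟩
  obtain ⟨y, hy⟩ := nonempty_interior_of_iUnion_of_closed
      (f := fun y : ↥L => ({y} : Set ↥L)) (fun y => isClosed_singleton)
      (iUnion_of_singleton ↥L)
  obtain ⟨c, hc⟩ := hy
  have hcy' : c ∈ ({y} : Set ↥L) := interior_subset hc
  rw [mem_singleton_iff] at hcy'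
  subst hcy'
  have hmemy : ({c} : Set ↥L) ∈ 𝓝 c := mem_interior_iff_mem_nhds.mp hc
  rw [mem_nhds_subtype] at hmemy
  obtain ⟨t, ht, hts⟩ := hmemy
  have hne : (interior t ∩ interior Km).Nonempty := by
    have hcl : (c : G) ∈ closure (interior Km) := c.2
    rw [mem_closure_iff_nhds] at hcl
    obtain ⟨w, hw1, hw2⟩ := hcl (interior t) (isOpen_interior.mem_nhds
      (mem_interior_iff_mem_nhds.mpr ht))
    exact ⟨w, hw1, hw2⟩
  obtain ⟨w, hw⟩ := hne
  refine ⟨w, ?_⟩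
  have heq : ({w} : Set G) = interior t ∩ interior Km := by
    apply Subset.antisymm
    · intro z hz; rw [mem_singleton_iff] at hz; exact hz ▸ hw
    · intro z hz
      have hzL : z ∈ L := subset_closure hz.2
      have hzt : z ∈ t := interior_subset hz.1
      have h1 : (⟨z, hzL⟩ : ↥L) ∈ Subtype.val ⁻¹' t := hzt
      have h2 := hts h1
      rw [mem_singleton_iff] at h2 ⊢
      have hwL : w ∈ L := subset_closure hw.2
      have hwt : w ∈ t := interior_subset hw.1
      have h3 : (⟨w, hwL⟩ : ↥L) ∈ Subtype.val ⁻¹' t := hwt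
      have h4 := hts h3
      rw [mem_singleton_iff] at h4
      have e1 : z = (c : G) := congrArg Subtype.val h2
      have e2 : w = (c : G) := congrArg Subtype.val h4
      rw [e1, e2]
  rw [heq]
  exact isOpen_interior.inter isOpen_interior

theorem punctured_compact (u : ℕ → G) (hu : Tendsto u atTop (𝓝 1))
    (hinj : Function.Injective u) (hne : ∀ k, u k ≠ 1) (i : ℕ) :
    IsCompact (insert 1 (range u) \ {u i}) := by
  set sk : ℕ → ℕ := fun k => if k < i then k else k + 1 with hsk
  have hrange : range (u ∘ sk) = range u \ {u i} := by
    ext y; constructor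
    · rintro ⟨k, rfl⟩
      refine ⟨⟨sk k, rfl⟩, ?_⟩
      intro hmem
      rw [mem_singleton_iff] at hmem
      have := hinj hmem
      simp only [hsk] at this
      split at this <;> omega
    · rintro ⟨⟨k, rfl⟩, hk⟩
      have hki : k ≠ i := by
        intro h; exact hk (by rw [h]; exact rfl)
      rcases lt_or_gt_of_ne hki with h | h
      · exact ⟨k, by simp [Function.comp, hsk, h]⟩
      · refine ⟨k - 1, ?_⟩
        have : sk (k-1) = k := by simp only [hsk]; split <;> omega
        simp [Function.comp, this]
  have hts : Tendsto (u ∘ sk) atTop (𝓝 1) := by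
    apply hu.comp
    apply tendsto_atTop_mono (f := id) (fun n => ?_) tendsto_id
    simp only [hsk, id]; split <;> omega
  have := hts.isCompact_insert_range
  rw [hrange] at this
  have heq : insert 1 (range u \ {u i}) = insert 1 (range u) \ {u i} := by
    ext z
    simp only [mem_insert_iff, mem_diff, mem_singleton_iff]
    constructor
    · rintro (rfl | ⟨h1, h2⟩)
      · exact ⟨Or.inl rfl, fun h => hne i h.symm⟩
      · exact ⟨Or.inr h1, h2⟩
    · rintro ⟨(rfl | h1), h2⟩
      · exact Or.inl rfl
      · exact Or.inr ⟨h1, h2⟩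
  rwa [heq] at this

theorem inj_refine (u : ℕ → G) (hu : Tendsto u atTop (𝓝 1)) (hne : ∀ k, u k ≠ 1) :
    ∃ v : ℕ → G, Function.Injective v ∧ Tendsto v atTop (𝓝 1) ∧ ∀ k, ∃ j, v k = u j := by
  have key : ∀ F : Finset G, (1:G) ∉ F → ∀ N : ℕ, ∃ j, N ≤ j ∧ u j ∉ F := by
    intro F hF N
    by_contra hcon
    push_neg at hcon
    have hfib : ∀ y ∈ F, {j : ℕ | u (j + N) = y}.Finite := by
      intro y hy
      by_contra hinf
      have hinf' : {j : ℕ | u (j + N) = y}.Infinite := hinf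
      have hfreq : ∃ᶠ j in atTop, u (j + N) = y :=
        Nat.frequently_atTop_iff_infinite.mpr hinf'
      obtain ⟨φ, hφmono, hφ⟩ := Filter.extraction_of_frequently_atTop hfreq
      have htend : Tendsto (fun j => u (φ j + N)) atTop (𝓝 1) := by
        apply hu.comp
        exact tendsto_atTop_mono (fun n => Nat.le_add_right (φ n) N)
          hφmono.tendsto_atTop
      have hconst : Tendsto (fun _ : ℕ => y) atTop (𝓝 1) := by
        have : (fun j => u (φ j + N)) = fun _ : ℕ => y := funext fun j => hφ j
        rwa [this] at htend
      have h1y : (1:G) = y := tendsto_nhds_unique hconst tendsto_const_nhds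
      exact hF (h1y ▸ hy)
    have huniv : (univ : Set ℕ) ⊆ ⋃ y ∈ F, {j : ℕ | u (j + N) = y} := by
      intro j _
      have := hcon (j + N) (Nat.le_add_left N j)
      exact mem_biUnion this rfl
    exact Set.infinite_univ ((F.finite_toSet.biUnion hfib).subset huniv)
  choose pick hpick1 hpick2 using key
  -- recursion
  let St := {p : ℕ × Finset G // (1:G) ∉ p.2 ∧ u p.1 ∉ p.2}
  have hinsert : ∀ p : St, (1:G) ∉ insert (u p.1.1) p.1.2 := by
    intro p
    rw [Finset.mem_insert]
    push_neg
    exact ⟨fun h => hne _ h.symm, p.2.1⟩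
  let step : St → St := fun p =>
    ⟨(pick (insert (u p.1.1) p.1.2) (hinsert p) (p.1.1 + 1), insert (u p.1.1) p.1.2),
      hinsert p, hpick2 _ (hinsert p) _⟩
  let c : ℕ → St := fun n => Nat.rec ⟨(0, ∅), by simp, by simp⟩ (fun _ p => step p) n
  have hc : ∀ n, c (n + 1) = step (c n) := fun n => rfl
  have hidx : ∀ n, (c n).1.1 + 1 ≤ (c (n+1)).1.1 := by
    intro n
    rw [hc n]
    exact hpick1 _ (hinsert (c n)) _
  have hFs : ∀ n, (c (n+1)).1.2 = insert (u (c n).1.1) (c n).1.2 := fun n => rfl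
  have hFmono : ∀ a b, a ≤ b → (c a).1.2 ⊆ (c b).1.2 := by
    intro a b hab
    induction b with
    | zero =>
      have : a = 0 := by omega
      rw [this]
    | succ b ih =>
      rcases Nat.lt_or_ge a (b+1) with h | h
      · refine (ih (by omega)).trans ?_
        rw [hFs b]
        exact Finset.subset_insert _ _
      · have : a = b + 1 := by omega
        rw [this]
  set v : ℕ → G := fun n => u (c n).1.1 with hv
  have hinj : Function.Injective v := by
    have hlt : ∀ a b, a < b → v a ≠ v b := by
      intro a b hab
      have h1 : u (c a).1.1 ∈ (c (a+1)).1.2 := by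
        rw [hFs a]; exact Finset.mem_insert_self _ _
      have h2 : u (c b).1.1 ∉ (c b).1.2 := (c b).2.2
      have h3 : (c (a+1)).1.2 ⊆ (c b).1.2 := hFmono (a+1) b hab
      intro heq
      rw [hv] at heq
      simp only at heq
      rw [heq] at h1
      exact h2 (h3 h1)
    intro a b hab
    by_contra hne'
    rcases lt_trichotomy a b with h | h | h
    · exact hlt a b h hab
    · exact hne' h
    · exact hlt b a h hab.symm
  have hstrict : StrictMono (fun n => (c n).1.1) := strictMono_nat_of_lt_succ (fun n => by
    have := hidx n; omega)
  exact ⟨v, hinj, hu.comp hstrict.tendsto_atTop, fun k => ⟨(c k).1.1, rfl⟩⟩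


theorem no_seq_nbhd (D : ℕ → Set G) (hDcomp : ∀ m, IsCompact (D m))
    (hDdet : ∀ A : Set G, (∀ m, IsClosed (A ∩ D m)) → IsClosed A)
    (relFC : ∀ (T : Set G), IsCompact T → ∀ x : G,
      ∃ N : ℕ → Set G, (∀ r, N r ∈ 𝓝 x) ∧ Antitone N ∧ ∀ O ∈ 𝓝 x, ∃ r, N r ∩ T ⊆ O)
    (det_seq_closed : ∀ A : Set G,
      (∀ (u : ℕ → G) (g : G), (∀ k, u k ∈ A) → Tendsto u atTop (𝓝 g) → g ∈ A) → IsClosed A)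
    (m : ℕ)
    (hstar : ∀ u : ℕ → G, Tendsto u atTop (𝓝 1) → ∀ᶠ k in atTop, u k ∈ D m)
    (hnotnbhd : D m ∉ 𝓝 1) : False := by
  set A : Set G := (D m)ᶜ with hA
  have h1A : (1:G) ∈ closure A := by
    rw [mem_closure_iff_nhds]
    intro t ht
    rcases (t ∩ A).eq_empty_or_nonempty with hemp | hne
    · exfalso
      apply hnotnbhd
      apply mem_of_superset ht
      intro y hy
      by_contra hyD
      exact absurd hemp (Set.nonempty_iff_ne_empty.mp ⟨y, hy, hyD⟩)
    · exact hne
  set S1 : Set G := {g | ∃ u : ℕ → G, (∀ k, u k ∈ A) ∧ Tendsto u atTop (𝓝 g)} with hS1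
  have hAS : A ⊆ S1 := fun a ha => ⟨fun _ => a, fun _ => ha, tendsto_const_nhds⟩
  have hseq : ∀ (w : ℕ → G) (g : G), (∀ k, w k ∈ S1) → Tendsto w atTop (𝓝 g) → g ∈ S1 := by
    intro w g hw hwg
    choose v hv1 hv2 using hw
    obtain ⟨N, hN, hNanti, hNbase⟩ := relFC (D m) (hDcomp m) 1
    have hd : ∀ k, Tendsto (fun i => (w k)⁻¹ * v k i) atTop (𝓝 1) := by
      intro k
      have h := (hv2 k).const_mul ((w k)⁻¹)
      rwa [inv_mul_cancel] at h
    have hsel : ∀ k, ∃ i, (w k)⁻¹ * v k i ∈ D m ∧ (w k)⁻¹ * v k i ∈ N k := by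
      intro k
      have h1 := hstar _ (hd k)
      have h2 := (hd k).eventually_mem (hN k)
      exact (h1.and h2).exists
    choose ik hik1 hik2 using hsel
    set s : ℕ → G := fun k => (w k)⁻¹ * v k (ik k) with hs
    have hst : Tendsto s atTop (𝓝 1) := by
      rw [tendsto_def]
      intro O hO
      obtain ⟨r, hr⟩ := hNbase O hO
      rw [mem_atTop_sets]
      exact ⟨r, fun k hk => hr ⟨hNanti hk (hik2 k), hik1 k⟩⟩
    have hwmul : Tendsto (fun k => w k * s k) atTop (𝓝 g) := by
      have h := hwg.mul hst
      rwa [mul_one] at h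
    refine ⟨fun k => w k * s k, fun k => ?_, hwmul⟩
    have heq : w k * s k = v k (ik k) := by
      rw [hs]; exact mul_inv_cancel_left _ _
    show w k * s k ∈ A
    rw [heq]
    exact hv1 k (ik k)
  have hS1closed : IsClosed S1 := det_seq_closed S1 hseq
  have h1S1 : (1:G) ∈ S1 := (closure_minimal hAS hS1closed) h1A
  obtain ⟨u, huA, hul⟩ := h1S1
  obtain ⟨k, hk⟩ := (hstar u hul).exists
  exact huA k hk


theorem punctured_compact' (u : ℕ → G) (hu : Tendsto u atTop (𝓝 1))
    (hinj : Function.Injective u) (hne : ∀ k, u k ≠ 1) (i : ℕ) :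
    IsCompact (insert 1 (range u \ {u i})) := by
  set sk : ℕ → ℕ := fun k => if k < i then k else k + 1 with hsk
  have hrange : range (u ∘ sk) = range u \ {u i} := by
    ext y; constructor
    · rintro ⟨k, rfl⟩
      refine ⟨⟨sk k, rfl⟩, ?_⟩
      intro hmem
      rw [mem_singleton_iff] at hmem
      have := hinj hmem
      simp only [hsk] at this
      split at this <;> omega
    · rintro ⟨⟨k, rfl⟩, hk⟩
      have hki : k ≠ i := by
        intro h; exact hk (by rw [h]; exact rfl)
      rcases lt_or_gt_of_ne hki with h | h
      · exact ⟨k, by simp [Function.comp, hsk, h]⟩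
      · refine ⟨k - 1, ?_⟩
        have : sk (k-1) = k := by simp only [hsk]; split <;> omega
        simp [Function.comp, this]
  have hts : Tendsto (u ∘ sk) atTop (𝓝 1) := by
    apply hu.comp
    apply tendsto_atTop_mono (f := id) (fun n => ?_) tendsto_id
    simp only [hsk, id]; split <;> omega
  have hcomp := hts.isCompact_insert_range
  rwa [hrange] at hcomp

theorem fan_case (D : ℕ → Set G) (hDcomp : ∀ m, IsCompact (D m)) (hDmono : Monotone D)
    (hD1 : ∀ m, (1:G) ∈ D m)
    (hDdet : ∀ A : Set G, (∀ m, IsClosed (A ∩ D m)) → IsClosed A)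
    (hcmp : ∀ K : Set G, IsCompact K → ∃ m, K ⊆ D m)
    (hesc : ∀ m, ∃ v : ℕ → G, Function.Injective v ∧ (∀ k, v k ∉ D m) ∧
      Tendsto v atTop (𝓝 1)) :
    ∃ C : Set G, IsClosed C ∧ Nonempty (↥C ≃ₜ SOmega) := by
  choose V hVinj hVD hVt using hesc
  have hVcomp : ∀ m, IsCompact (insert 1 (range (V m))) := fun m => (hVt m).isCompact_insert_range
  choose bnd hbnd using fun m => hcmp _ (hVcomp m)
  set M : ℕ → ℕ := fun j => Nat.rec 0 (fun _ Mj => max (bnd Mj) Mj + 1) j with hM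
  have hMsucc : ∀ j, M (j+1) = max (bnd (M j)) (M j) + 1 := fun j => rfl
  have hMstrict : StrictMono M := strictMono_nat_of_lt_succ (fun j => by
    rw [hMsucc j]; omega)
  set x : ℕ → ℕ → G := fun j => V (M j) with hx
  have hxinj : ∀ j, Function.Injective (x j) := fun j => hVinj (M j)
  have hxD : ∀ j i, x j i ∉ D (M j) := fun j i => hVD (M j) i
  have hxt : ∀ j, Tendsto (x j) atTop (𝓝 1) := fun j => hVt (M j)
  have hne1 : ∀ j i, x j i ≠ 1 := fun j i h => hxD j i (h ▸ hD1 (M j))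
  have hrange : ∀ j, insert 1 (range (x j)) ⊆ D (M (j+1)) := by
    intro j
    refine (hbnd (M j)).trans (hDmono ?_)
    rw [hMsucc j]; omega
  have hMge : ∀ j, j ≤ M j := fun j => hMstrict.le_apply
  have hdisj : ∀ j j' i i', j < j' → x j i ≠ x j' i' := by
    intro j j' i i' hjj' heq
    have h1 : x j i ∈ D (M (j+1)) := hrange j (Or.inr ⟨i, rfl⟩)
    have h2 : x j i ∈ D (M j') := hDmono (hMstrict.monotone hjj') h1
    exact hxD j' i' (heq ▸ h2)
  have hxnotD : ∀ (mm j : ℕ), mm ≤ j → ∀ i, x j i ∉ D mm := by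
    intro mm j hmj i hmem
    exact hxD j i (hDmono (hmj.trans (hMge j)) hmem)
  -- the closed fan
  set C : Set G := insert 1 (⋃ j, range (x j)) with hC
  -- generic closedness
  have hclosed_insert : ∀ S : ℕ → Set G, (∀ j, S j ⊆ range (x j)) →
      (∀ j, IsCompact (insert 1 (S j))) → IsClosed (insert 1 (⋃ j, S j)) := by
    intro S hSsub hScomp
    apply hDdet
    intro mm
    have htr : (insert 1 (⋃ j, S j)) ∩ D mm
        = ({1} ∪ ⋃ j ∈ Finset.range mm, insert 1 (S j)) ∩ D mm := by
      ext y
      simp only [mem_inter_iff, mem_insert_iff, mem_union, mem_iUnion, mem_singleton_iff,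
        Finset.mem_range]
      constructor
      · rintro ⟨(rfl | ⟨j, hyS⟩), hyD⟩
        · exact ⟨Or.inl rfl, hyD⟩
        · obtain ⟨i, rfl⟩ := hSsub j hyS
          have hjm : j < mm := by
            by_contra h
            exact hxnotD mm j (le_of_not_gt h) i hyD
          exact ⟨Or.inr ⟨j, hjm, Or.inr hyS⟩, hyD⟩
      · rintro ⟨(rfl | ⟨j, _, (rfl | hyS)⟩), hyD⟩
        · exact ⟨Or.inl rfl, hyD⟩
        · exact ⟨Or.inl rfl, hyD⟩
        · exact ⟨Or.inr ⟨j, hyS⟩, hyD⟩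
    rw [htr]
    have hcomp : IsCompact ({1} ∪ ⋃ j ∈ Finset.range mm, insert 1 (S j)) := by
      apply IsCompact.union isCompact_singleton
      apply (Finset.range mm).finite_toSet.isCompact_biUnion
      intro j _
      exact hScomp j
    exact (hcomp.inter_right (hDcomp mm).isClosed).isClosed
  have hCclosed : IsClosed C :=
    hclosed_insert (fun j => range (x j)) (fun j => Subset.rfl) (fun j => hVcomp (M j))
  -- isolation of non-vertex points
  have hisol : ∀ j i, ∃ Vo : Set G, IsOpen Vo ∧ Vo ∩ C = {x j i} := by
    intro j i
    set S : ℕ → Set G := fun j' => if j' = j then range (x j) \ {x j i} else range (x j') with hS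
    have hSj : S j = range (x j) \ {x j i} := by
      simp only [hS, if_pos rfl]
    have hSne : ∀ j', j' ≠ j → S j' = range (x j') := by
      intro j' h
      simp only [hS, if_neg h]
    have hsub : ∀ j', S j' ⊆ range (x j') := by
      intro j'
      by_cases h : j' = j
      · subst h; rw [hSj]; exact diff_subset
      · rw [hSne j' h]
    have hscomp : ∀ j', IsCompact (insert 1 (S j')) := by
      intro j'
      by_cases h : j' = j
      · subst h; rw [hSj]
        exact punctured_compact' (x j') (hxt j') (hxinj j') (hne1 j') i
      · rw [hSne j' h]
        exact hVcomp (M j')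
    have hequal : insert 1 (⋃ j', S j') = C \ {x j i} := by
      ext z
      simp only [hC, mem_insert_iff, mem_iUnion, mem_diff, mem_singleton_iff]
      constructor
      · rintro (rfl | ⟨j', hz⟩)
        · exact ⟨Or.inl rfl, fun h => hne1 j i h.symm⟩
        · by_cases h : j' = j
          · subst h
            rw [hSj] at hz
            exact ⟨Or.inr ⟨j', hz.1⟩, hz.2⟩
          · rw [hSne j' h] at hz
            obtain ⟨i', rfl⟩ := hz
            refine ⟨Or.inr ⟨j', ⟨i', rfl⟩⟩, ?_⟩
            rcases lt_or_gt_of_ne h with hlt | hlt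
            · exact hdisj j' j i' i hlt
            · exact fun heq => (hdisj j j' i i' hlt) heq.symm
      · rintro ⟨(rfl | ⟨j', i', rfl⟩), hzne⟩
        · exact Or.inl rfl
        · refine Or.inr ⟨j', ?_⟩
          by_cases h : j' = j
          · subst h
            rw [hSj]
            exact ⟨⟨i', rfl⟩, hzne⟩
          · rw [hSne j' h]
            exact ⟨i', rfl⟩
    have hclosed : IsClosed (C \ {x j i}) := by
      rw [← hequal]
      exact hclosed_insert S hsub hscomp
    refine ⟨(C \ {x j i})ᶜ, hclosed.isOpen_compl, ?_⟩
    ext z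
    simp only [mem_inter_iff, mem_compl_iff, mem_diff, mem_singleton_iff, not_and, not_not]
    constructor
    · rintro ⟨h1, h2⟩
      exact h1 h2
    · rintro rfl
      exact ⟨fun h => rfl, Or.inr (mem_iUnion.mpr ⟨j, ⟨i, rfl⟩⟩)⟩
  -- heads are closed
  have hheads : ∀ φ : ℕ → ℕ, IsClosed (⋃ j, x j '' (Iio (φ j))) := by
    intro φ
    apply hDdet
    intro mm
    have hsub2 : (⋃ j, x j '' (Iio (φ j))) ∩ D mm ⊆
        ⋃ j ∈ Finset.range mm, x j '' (Iio (φ j)) := by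
      rintro y ⟨hy, hyD⟩
      obtain ⟨j, i, hi, rfl⟩ := by
        simpa only [mem_iUnion, mem_image] using hy
      have hjm : j < mm := by
        by_contra h
        exact hxnotD mm j (le_of_not_gt h) i hyD
      simp only [mem_iUnion, Finset.mem_range, mem_image]
      exact ⟨j, hjm, i, hi, rfl⟩
    have hfin : ((⋃ j, x j '' (Iio (φ j))) ∩ D mm).Finite := by
      refine Set.Finite.subset ?_ hsub2
      apply (Finset.range mm).finite_toSet.biUnion
      intro j _
      exact (finite_Iio (φ j)).image (x j)
    exact hfin.isClosed
  -- tails enter neighborhoods / the quotient map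
  let Fmap : ℕ × OnePoint ℕ → G := fun p =>
    match p.2 with
    | none => 1
    | some i => x p.1 i
  have hFinfty : ∀ j : ℕ, Fmap (j, OnePoint.infty) = 1 := fun j => rfl
  have hFcoe : ∀ (j i : ℕ), Fmap (j, (i : OnePoint ℕ)) = x j i := fun j i => rfl
  have hFmem : ∀ p, Fmap p ∈ C := by
    rintro ⟨j, (_ | i)⟩
    · exact Or.inl rfl
    · exact Or.inr (mem_iUnion.mpr ⟨j, ⟨i, rfl⟩⟩)
  let toC : ℕ × OnePoint ℕ → ↥C := fun p => ⟨Fmap p, hFmem p⟩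
  have hresp : ∀ a b : ℕ × OnePoint ℕ, SOmegaSetoid.r a b → toC a = toC b := by
    rintro a b (rfl | ⟨h1, h2⟩)
    · rfl
    · apply Subtype.ext
      show Fmap a = Fmap b
      have key : ∀ p : ℕ × OnePoint ℕ, p.2 = OnePoint.infty → Fmap p = 1 := by
        rintro ⟨p1, p2⟩ h
        dsimp only at h
        subst h
        rfl
      rw [key a h1, key b h2]
  let q : SOmega → ↥C := Quotient.lift toC hresp
  -- continuity of Fmap
  have hnone : ∀ j : ℕ, Tendsto Fmap (𝓝 (j, OnePoint.infty)) (𝓝 (Fmap (j, OnePoint.infty))) := by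
    intro j
    rw [hFinfty, nhds_prod_eq, (isOpen_singleton_iff_nhds_eq_pure j).mp (isOpen_discrete _),
      Filter.pure_prod]
    rw [Filter.tendsto_map'_iff]
    have hT : Tendsto (Fmap ∘ Prod.mk j) (𝓝 (OnePoint.infty : OnePoint ℕ)) (𝓝 (1:G)) := by
      rw [OnePoint.nhds_infty_eq, Filter.tendsto_sup]
      constructor
      · rw [Filter.tendsto_map'_iff]
        have hcomp : (Fmap ∘ Prod.mk j) ∘ ((↑) : ℕ → OnePoint ℕ) = x j := by
          funext i; exact hFcoe j i
        rw [hcomp, Filter.coclosedCompact_eq_cocompact, cocompact_eq_atTop]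
        exact hxt j
      · rw [Filter.tendsto_pure_left]
        intro s hs
        have h1 : (Fmap ∘ Prod.mk j) OnePoint.infty = 1 := hFinfty j
        rw [Function.comp_apply] at h1 ⊢
        rw [h1]
        exact mem_of_mem_nhds hs
    exact hT
    exact 0
  have hFcont : Continuous Fmap := by
    rw [continuous_iff_continuousAt]
    rintro ⟨j, (_ | i)⟩
    · exact hnone j
    · -- at (j, some i) : isolated point
      have hopen : IsOpen ({(j, (i : OnePoint ℕ))} : Set (ℕ × OnePoint ℕ)) := by
        have h2 : IsOpen ({(i : OnePoint ℕ)} : Set (OnePoint ℕ)) := by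
          have := OnePoint.isOpenEmbedding_coe (X := ℕ)
          have himg : ((↑) : ℕ → OnePoint ℕ) '' {i} = {(i : OnePoint ℕ)} := by
            simp
          rw [← himg]
          exact this.isOpenMap _ (isOpen_discrete _)
        have := (isOpen_discrete ({j} : Set ℕ)).prod h2
        have heq2 : ({j} : Set ℕ) ×ˢ ({(i : OnePoint ℕ)} : Set (OnePoint ℕ))
            = {(j, (i : OnePoint ℕ))} := by
          ext ⟨a, b⟩
          simp [Prod.ext_iff]
        rwa [heq2] at this
      show Tendsto Fmap (𝓝 (j, (i : OnePoint ℕ))) _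
      rw [(isOpen_singleton_iff_nhds_eq_pure _).mp hopen]
      exact tendsto_pure_nhds _ _
  have hqcont : Continuous q := (hFcont.subtype_mk hFmem).quotient_lift hresp
  -- bijectivity
  have hinjq : Function.Injective q := by
    intro a b
    induction a using Quotient.ind
    induction b using Quotient.ind
    rename_i p1 p2
    intro h
    have hF : Fmap p1 = Fmap p2 := congrArg Subtype.val h
    apply Quotient.sound
    obtain ⟨a1, a2⟩ := p1
    obtain ⟨b1, b2⟩ := p2
    clear h
    rcases a2 with _ | i1 <;> rcases b2 with _ | i2
    · exact Or.inr ⟨rfl, rfl⟩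
    · exact absurd ((hFinfty a1).symm.trans hF) (fun h => hne1 b1 i2 h.symm)
    · exact absurd (hF.trans (hFinfty b1)) (hne1 a1 i1)
    · have hxx : x a1 i1 = x b1 i2 := hF
      rcases lt_trichotomy a1 b1 with hlt | heqj | hlt
      · exact absurd hxx (hdisj a1 b1 i1 i2 hlt)
      · subst heqj
        have : i1 = i2 := hxinj a1 hxx
        subst this
        exact Or.inl rfl
      · exact absurd hxx.symm (hdisj b1 a1 i2 i1 hlt)
  have hsurjq : Function.Surjective q := by
    rintro ⟨c, hc⟩
    rcases hc with rfl | hc2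
    · exact ⟨Quotient.mk SOmegaSetoid (0, OnePoint.infty), Subtype.ext (hFinfty 0)⟩
    · obtain ⟨j, i, rfl⟩ := by simpa only [mem_iUnion, mem_range] using hc2
      exact ⟨Quotient.mk SOmegaSetoid (j, (i : OnePoint ℕ)), Subtype.ext (hFcoe j i)⟩
  let e : SOmega ≃ ↥C := Equiv.ofBijective q ⟨hinjq, hsurjq⟩
  have hecoe : ∀ z, e z = q z := fun z => rfl
  -- continuity of the inverse
  have hvert : e (Quotient.mk SOmegaSetoid (0, OnePoint.infty)) = ⟨1, Or.inl rfl⟩ :=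
    Subtype.ext (hFinfty 0)
  have hinvcont : Continuous (e.symm : ↥C → SOmega) := by
    rw [continuous_iff_continuousAt]
    rintro ⟨c, hc⟩
    by_cases hc1 : c = (1:G)
    · subst hc1
      -- vertex point
      show Tendsto e.symm (𝓝 ⟨(1:G), hc⟩) (𝓝 (e.symm ⟨(1:G), hc⟩))
      have hsymm1 : e.symm (⟨(1:G), hc⟩ : ↥C) = Quotient.mk SOmegaSetoid (0, OnePoint.infty) :=
        e.symm_apply_eq.mpr hvert.symm
      rw [hsymm1]
      refine tendsto_nhds.mpr ?_
      intro O hOopen hOmem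
      have hOpre : IsOpen (Quotient.mk SOmegaSetoid ⁻¹' O) :=
        hOopen.preimage continuous_quotient_mk'
      have hOinf : ∀ j : ℕ, (j, OnePoint.infty) ∈ Quotient.mk SOmegaSetoid ⁻¹' O := by
        intro j
        have hq2 : Quotient.mk SOmegaSetoid (j, OnePoint.infty)
            = Quotient.mk SOmegaSetoid (0, OnePoint.infty) :=
          Quotient.sound (Or.inr ⟨rfl, rfl⟩)
        show Quotient.mk SOmegaSetoid (j, OnePoint.infty) ∈ O
        rw [hq2]
        exact hOmem
      have hsl : ∀ j : ℕ, ∃ N : ℕ, ∀ i ≥ N,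
          (j, ((i : ℕ) : OnePoint ℕ)) ∈ Quotient.mk SOmegaSetoid ⁻¹' O := by
        intro j
        have hslopen : IsOpen {w : OnePoint ℕ | (j, w) ∈ Quotient.mk SOmegaSetoid ⁻¹' O} :=
          hOpre.preimage (Continuous.prodMk_right j)
        have hslmem : {w : OnePoint ℕ | (j, w) ∈ Quotient.mk SOmegaSetoid ⁻¹' O} ∈
            𝓝 (OnePoint.infty : OnePoint ℕ) := hslopen.mem_nhds (hOinf j)
        rw [OnePoint.nhds_infty_eq, Filter.mem_sup, Filter.mem_map,
          Filter.coclosedCompact_eq_cocompact, cocompact_eq_atTop, mem_atTop_sets] at hslmem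
        obtain ⟨⟨N, hN⟩, _⟩ := hslmem
        exact ⟨N, fun i hi => hN i hi⟩
      choose φ hφ using hsl
      set H : Set G := ⋃ j, x j '' (Iio (φ j)) with hH
      have hHclosed : IsClosed H := hheads φ
      have h1H : (1:G) ∉ H := by
        rw [hH]
        simp only [mem_iUnion, mem_image]
        rintro ⟨j, i, _, hxi⟩
        exact hne1 j i hxi
      have hWmem : Hᶜ ∈ 𝓝 (1:G) := hHclosed.isOpen_compl.mem_nhds h1H
      have hpre : (Subtype.val : ↥C → G) ⁻¹' Hᶜ ∈ 𝓝 (⟨(1:G), hc⟩ : ↥C) :=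
        continuous_subtype_val.continuousAt.preimage_mem_nhds hWmem
      refine Filter.eventually_of_mem hpre ?_
      rintro ⟨z, hz⟩ hzH
      by_cases hz1 : z = (1:G)
      · subst hz1
        have heq0 : e.symm (⟨(1:G), hz⟩ : ↥C) = Quotient.mk SOmegaSetoid (0, OnePoint.infty) :=
          e.symm_apply_eq.mpr hvert.symm
        show e.symm (⟨(1:G), hz⟩ : ↥C) ∈ O
        rw [heq0]
        exact hOmem
      · have hz2 : z ∈ ⋃ j, range (x j) := hz.resolve_left hz1
        have hz3 : ∃ j i, x j i = z := by
          simpa only [mem_iUnion, mem_range] using hz2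
        obtain ⟨j, i, hxji⟩ := hz3
        have hige : φ j ≤ i := by
          by_contra hlt
          apply hzH
          show z ∈ H
          rw [hH]
          rw [← hxji]
          exact mem_iUnion.mpr ⟨j, mem_image_of_mem (x j) (lt_of_not_ge hlt)⟩
        have hmemO : Quotient.mk SOmegaSetoid (j, ((i : ℕ) : OnePoint ℕ)) ∈ O := hφ j i hige
        have heqz : e.symm (⟨z, hz⟩ : ↥C)
            = Quotient.mk SOmegaSetoid (j, ((i : ℕ) : OnePoint ℕ)) := by
          apply e.symm_apply_eq.mpr
          exact Subtype.ext ((hFcoe j i).trans hxji).symm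
        show e.symm (⟨z, hz⟩ : ↥C) ∈ O
        rw [heqz]
        exact hmemO
    · -- isolated point
      have hc2 : c ∈ ⋃ j, range (x j) := hc.resolve_left hc1
      have hc3 : ∃ j i, x j i = c := by
        simpa only [mem_iUnion, mem_range] using hc2
      obtain ⟨j, i, hxji⟩ := hc3
      obtain ⟨Vo, hVoopen, hVoC⟩ := hisol j i
      have hopen2 : IsOpen ((Subtype.val : ↥C → G) ⁻¹' Vo) :=
        hVoopen.preimage continuous_subtype_val
      have hxVo : x j i ∈ Vo := by
        have hx1 : x j i ∈ ({x j i} : Set G) := rfl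
        rw [← hVoC] at hx1
        exact hx1.1
      have heqset : (Subtype.val : ↥C → G) ⁻¹' Vo = {(⟨c, hc⟩ : ↥C)} := by
        ext w
        obtain ⟨z, hzC⟩ := w
        simp only [mem_preimage, mem_singleton_iff]
        constructor
        · intro hzV
          have hzin : z ∈ Vo ∩ C := ⟨hzV, hzC⟩
          rw [hVoC, mem_singleton_iff] at hzin
          exact Subtype.ext (hzin.trans hxji)
        · intro h
          have hzc : z = c := congrArg Subtype.val h
          rw [hzc, ← hxji]
          exact hxVo
      have hnp : 𝓝 (⟨c, hc⟩ : ↥C) = pure ⟨c, hc⟩ := by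
        rw [← isOpen_singleton_iff_nhds_eq_pure, ← heqset]
        exact hopen2
      show Tendsto e.symm (𝓝 ⟨c, hc⟩) (𝓝 (e.symm ⟨c, hc⟩))
      rw [hnp]
      exact tendsto_pure_nhds _ _
  exact ⟨C, hCclosed, ⟨(Homeomorph.mk e hqcont hinvcont).symm⟩⟩


end Aux

/-- Let `G` be a regular T1 countable paratopological group which is locally `kω`
(every point has a neighborhood which, as a subspace, is a `kω`-space). Then either
`G` is a discrete topological group, or `G` contains a closed subspace homeomorphic
to `Sω`. -/
theorem countable_locally_kOmega_paratopological_group_discrete_or_SOmega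
    {G : Type} [Group G] [TopologicalSpace G] [ContinuousMul G]
    [RegularSpace G] [T1Space G] [Countable G]
    (hloc : ∀ x : G, ∃ U ∈ 𝓝 x, IsKOmegaSpace ↥U) :
    (DiscreteTopology G ∧ IsTopologicalGroup G) ∨
      ∃ C : Set G, IsClosed C ∧ Nonempty (C ≃ₜ SOmega) := by
  classical
  by_cases hiso : ∃ w : G, IsOpen ({w} : Set G)
  · obtain ⟨w, hw⟩ := hiso
    exact Or.inl (discrete_of_isolated w hw)
  · -- no isolated points
    choose U hU hKw using hloc
    choose K tK hcomp f hqf using hKw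
    set E : G → ℕ → Set G :=
      fun g n => Subtype.val '' (f g '' (Set.range (@Sigma.mk ℕ (K g) n))) with hE
    have hEcomp : ∀ g n, IsCompact (E g n) := by
      intro g n
      letI : ∀ i, TopologicalSpace (K g i) := tK g
      haveI : CompactSpace (K g n) := hcomp g n
      have h1 : IsCompact (Set.range (@Sigma.mk ℕ (K g) n)) := isCompact_range continuous_sigmaMk
      have h2 : IsCompact (f g '' Set.range (@Sigma.mk ℕ (K g) n)) := h1.image (hqf g).continuous
      exact h2.image continuous_subtype_val
    have hEmem : ∀ g, ∃ n, g ∈ E g n := by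
      intro g
      have hgU : g ∈ U g := mem_of_mem_nhds (hU g)
      obtain ⟨s, hs⟩ := (hqf g).surjective ⟨g, hgU⟩
      refine ⟨s.1, ?_⟩
      exact ⟨f g s, ⟨s, ⟨s.2, rfl⟩, rfl⟩, by rw [hs]⟩
    obtain ⟨σ, hσ⟩ := exists_surjective_nat (G × ℕ)
    set D : ℕ → Set G :=
      fun mm => insert 1 (⋃ i ∈ Finset.range (mm+1), E (σ i).1 (σ i).2) with hD
    have hDcomp : ∀ mm, IsCompact (D mm) := by
      intro mm
      apply IsCompact.insert
      exact (Finset.range (mm+1)).finite_toSet.isCompact_biUnion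
        (fun i _ => hEcomp (σ i).1 (σ i).2)
    have hDmono : Monotone D := by
      intro a b hab y hy
      rcases hy with rfl | hy2
      · exact Or.inl rfl
      · refine Or.inr ?_
        rw [Set.mem_iUnion₂] at hy2 ⊢
        obtain ⟨i, hi, h⟩ := hy2
        exact ⟨i, by simp only [Finset.mem_range] at hi ⊢; omega, h⟩
    have hD1 : ∀ mm, (1:G) ∈ D mm := fun mm => Or.inl rfl
    have hEsubD : ∀ g n, ∃ mm, E g n ⊆ D mm := by
      intro g n
      obtain ⟨i, hi⟩ := hσ (g, n)
      refine ⟨i, ?_⟩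
      intro y hy
      refine Or.inr (Set.mem_iUnion₂.mpr ⟨i, by simp, ?_⟩)
      rw [hi]
      exact hy
    have hDcover : ∀ g : G, ∃ m, g ∈ D m := by
      intro g
      obtain ⟨n, hn⟩ := hEmem g
      obtain ⟨mm, hmm⟩ := hEsubD g n
      exact ⟨mm, hmm hn⟩
    have hDdet : ∀ A : Set G, (∀ m, IsClosed (A ∩ D m)) → IsClosed A := by
      intro A hA
      have hAE : ∀ g n, IsClosed (A ∩ E g n) := by
        intro g n
        obtain ⟨mm, hmm⟩ := hEsubD g n
        have heq : A ∩ E g n = (A ∩ D mm) ∩ E g n := by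
          ext y
          exact ⟨fun hy => ⟨⟨hy.1, hmm hy.2⟩, hy.2⟩, fun hy => ⟨hy.1.1, hy.2⟩⟩
        rw [heq]
        exact (hA mm).inter (hEcomp g n).isClosed
      rw [← isOpen_compl_iff, isOpen_iff_mem_nhds]
      intro g hg
      obtain ⟨Cl, hClclosed, hClU⟩ :=
        det_aux (U g) (K g) (tK g) (f g) (hqf g) A (fun n => hAE g n)
      have hgU : g ∈ U g := mem_of_mem_nhds (hU g)
      have hgCl : g ∉ Cl := by
        intro hgCl
        have hmem2 : g ∈ A ∩ U g := by rw [← hClU]; exact ⟨hgCl, hgU⟩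
        exact hg hmem2.1
      have hnb : interior (U g) ∩ Clᶜ ∈ 𝓝 g :=
        Filter.inter_mem (interior_mem_nhds.mpr (hU g))
          (hClclosed.isOpen_compl.mem_nhds hgCl)
      apply Filter.mem_of_superset hnb
      rintro y ⟨hy1, hy2⟩
      intro hyA
      have hyU : y ∈ U g := interior_subset hy1
      have : y ∈ Cl ∩ U g := by rw [hClU]; exact ⟨hyA, hyU⟩
      exact hy2 this.1
    have hrelFC := fun (T : Set G) (hT : IsCompact T) (x : G) => relFC T hT x
    have hseqcl := fun (A : Set G) hseq =>
      det_seq_closed D hDcomp hDdet hrelFC A hseq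
    by_cases hstar : ∃ m, ∀ u : ℕ → G, Filter.Tendsto u Filter.atTop (𝓝 1) →
        ∀ᶠ k in Filter.atTop, u k ∈ D m
    · exfalso
      obtain ⟨m, hm⟩ := hstar
      by_cases hnbhd : D m ∈ 𝓝 1
      · exact hiso (isolated_of_compact_nhds (hDcomp m) hnbhd)
      · exact no_seq_nbhd D hDcomp hDdet hrelFC hseqcl m hm hnbhd
    · push_neg at hstar
      have hesc : ∀ m, ∃ v : ℕ → G, Function.Injective v ∧ (∀ k, v k ∉ D m) ∧
          Filter.Tendsto v Filter.atTop (𝓝 1) := by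
        intro m
        obtain ⟨u, hut, hnev⟩ := hstar m
        have hfreq : ∃ᶠ k in Filter.atTop, u k ∉ D m := hnev
        obtain ⟨ψ, hψmono, hψ⟩ := Filter.extraction_of_frequently_atTop hfreq
        have hut2 : Filter.Tendsto (u ∘ ψ) Filter.atTop (𝓝 1) :=
          hut.comp hψmono.tendsto_atTop
        have hne2 : ∀ k, (u ∘ ψ) k ≠ 1 := by
          intro k h
          apply hψ k
          have h' : u (ψ k) = 1 := h
          rw [h']
          exact hD1 m
        obtain ⟨v, hvinj, hvt, hvmem⟩ := inj_refine (u ∘ ψ) hut2 hne2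
        refine ⟨v, hvinj, ?_, hvt⟩
        intro k
        obtain ⟨jj, hjj⟩ := hvmem k
        rw [hjj]
        exact hψ jj
      obtain ⟨C, h1, h2⟩ := fan_case D hDcomp hDmono hD1 hDdet
        (fun K' hK' => det_compact_subset D hDmono hDcover hDdet hK') hesc
      exact Or.inr ⟨C, h1, h2⟩
end

section
/- The Sorgenfrey line is not H-closed as a paratopological group: there exist a Hausdorff paratopological group H and an injective group homomorphism φ from (ℝ, +) into H which is a topological embedding with respect to the Sorgenfrey topology on ℝ, such that the image φ(ℝ) is not closed in H. -/
open Topology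

/-- The Sorgenfrey topology on `ℝ`: generated by the half-open intervals `[a, b)`. -/
def sorgenfreyTopology : TopologicalSpace ℝ :=
  TopologicalSpace.generateFrom {s : Set ℝ | ∃ a b : ℝ, s = Set.Ico a b}

/-- A witness that the Sorgenfrey line is not H-closed: a Hausdorff paratopological
group `H` together with an injective group homomorphism `φ` from `(ℝ, +)` into `H`
which is a topological embedding with respect to the Sorgenfrey topology on `ℝ`,
such that the image `φ(ℝ)` is not closed in `H`. -/
structure SorgenfreyNotHClosedWitness where
  H : Type
  [addGroup : AddGroup H]
  [top : TopologicalSpace H]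
  hausdorff : T2Space H
  paratopological : ContinuousAdd H
  φ : ℝ →+ H
  injective : Function.Injective φ
  embedding : @IsEmbedding ℝ H sorgenfreyTopology top φ
  image_not_closed : ¬ IsClosed (Set.range φ)

namespace SorgenfreyWitness

/-! ### A fast growing integer sequence with strong congruence properties -/

/-- Pair `(s n, M n)`. -/
def SM : ℕ → ℤ × ℤ
  | 0 => (1, 1)
  | n+1 =>
    let p := SM n
    (p.1 + p.2, ((n : ℤ) + 2) * (p.1 + p.2) * p.2)

def sq (n : ℕ) : ℤ := (SM n).1
def Mq (n : ℕ) : ℤ := (SM n).2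

lemma sq_zero : sq 0 = 1 := rfl
lemma Mq_zero : Mq 0 = 1 := rfl
lemma sq_succ (n : ℕ) : sq (n+1) = sq n + Mq n := rfl
lemma Mq_succ (n : ℕ) : Mq (n+1) = ((n : ℤ) + 2) * sq (n+1) * Mq n := rfl

lemma one_le_sq_Mq (n : ℕ) : 1 ≤ sq n ∧ 1 ≤ Mq n := by
  induction n with
  | zero => exact ⟨le_refl 1, le_refl 1⟩
  | succ n ih =>
    have hs : 1 ≤ sq (n+1) := by rw [sq_succ]; linarith [ih.1, ih.2]
    refine ⟨hs, ?_⟩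
    rw [Mq_succ]
    have h2 : (1:ℤ) ≤ (n : ℤ) + 2 := by
      have := Int.natCast_nonneg n; linarith
    have hq1 : (1:ℤ) ≤ ((n:ℤ) + 2) * sq (n+1) := by nlinarith
    nlinarith [ih.2, hq1]

lemma one_le_sq (n : ℕ) : 1 ≤ sq n := (one_le_sq_Mq n).1
lemma one_le_Mq (n : ℕ) : 1 ≤ Mq n := (one_le_sq_Mq n).2

lemma lt_sq (n : ℕ) : (n : ℤ) < sq n := by
  induction n with
  | zero => simp [sq_zero]
  | succ n ih =>
    rw [sq_succ]
    push_cast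
    linarith [one_le_Mq n]

lemma Mq_dvd_Mq {m n : ℕ} (h : m ≤ n) : Mq m ∣ Mq n := by
  induction n, h using Nat.le_induction with
  | base => exact dvd_rfl
  | succ n hmn ih =>
    rw [Mq_succ]
    exact Dvd.dvd.mul_left ih _

lemma Mq_dvd_sub {m n : ℕ} (h : m ≤ n) : Mq m ∣ sq n - sq m := by
  induction n, h using Nat.le_induction with
  | base => simp
  | succ n hmn ih =>
    rw [sq_succ]
    have : sq n + Mq n - sq m = (sq n - sq m) + Mq n := by ring
    rw [this]
    exact dvd_add ih (Mq_dvd_Mq hmn)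

lemma Mq_ge (m : ℕ) : ((m : ℤ) + 1) * sq m ≤ Mq m := by
  cases m with
  | zero => simp [sq_zero, Mq_zero]
  | succ n =>
    rw [Mq_succ]
    push_cast
    have h0 : (0:ℤ) ≤ ((n:ℤ) + 2) * sq (n+1) :=
      mul_nonneg (by have := Int.natCast_nonneg n; linarith)
        (by linarith [one_le_sq (n+1)])
    have key : ((n:ℤ)+2) * sq (n+1) ≤ ((n:ℤ)+2) * sq (n+1) * Mq n :=
      le_mul_of_one_le_right h0 (one_le_Mq n)
    linarith

/-- sums of `s` over lists of large indices are congruent to `len • s m` mod `M m`. -/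
lemma sum_congr {m : ℕ} {l : List ℕ} (hl : ∀ i ∈ l, m ≤ i) :
    Mq m ∣ (l.map sq).sum - (l.length : ℤ) * sq m := by
  induction l with
  | nil => simp
  | cons a t ih =>
    have ha : m ≤ a := hl a List.mem_cons_self
    have ht : ∀ i ∈ t, m ≤ i := fun i hi => hl i (List.mem_cons_of_mem a hi)
    have h1 : Mq m ∣ sq a - sq m := Mq_dvd_sub ha
    have h2 := ih ht
    have : (List.map sq (a :: t)).sum - ((a :: t).length : ℤ) * sq m
        = (sq a - sq m) + ((t.map sq).sum - (t.length : ℤ) * sq m) := by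
      simp only [List.map_cons, List.sum_cons, List.length_cons]
      push_cast
      ring
    rw [this]
    exact dvd_add h1 h2

/-- The key arithmetical separation property. -/
lemma int_sep (T k : ℤ) (h : ¬(T = 0 ∧ k = 0)) :
    ∃ m : ℕ, ∀ (l l' : List ℕ), (∀ i ∈ l, m ≤ i) → (∀ i ∈ l', m ≤ i) →
      ((l'.length : ℤ) - (l.length : ℤ) = k) →
      (l'.map sq).sum - (l.map sq).sum ≠ T := by
  refine ⟨T.natAbs + k.natAbs + 1, ?_⟩
  intro l l' hl hl' hk heq
  set m : ℕ := T.natAbs + k.natAbs + 1 with hm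
  have hmz : (m : ℤ) = |T| + |k| + 1 := by
    rw [hm]
    push_cast
    rw [Int.abs_eq_natAbs T, Int.abs_eq_natAbs k]
  have h1 := sum_congr hl
  have h2 := sum_congr hl'
  -- Mq m ∣ T - k * sq m
  have hdvd : Mq m ∣ T - k * sq m := by
    have : T - k * sq m =
        ((l'.map sq).sum - (l'.length : ℤ) * sq m) -
        ((l.map sq).sum - (l.length : ℤ) * sq m) := by
      rw [← heq, ← hk]; ring
    rw [this]
    exact dvd_sub h2 h1
  have hsm : (m : ℤ) < sq m := lt_sq m
  have hMm : ((m : ℤ) + 1) * sq m ≤ Mq m := Mq_ge m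
  have hsm1 : 1 ≤ sq m := one_le_sq m
  by_cases hk0 : k = 0
  · -- then T ≠ 0, |T| < Mq m, contradiction
    have hT0 : T ≠ 0 := fun hT => h ⟨hT, hk0⟩
    rw [hk0] at hdvd
    simp only [zero_mul, sub_zero] at hdvd
    have habs : Mq m ∣ |T| := (dvd_abs _ _).mpr hdvd
    have hle := Int.le_of_dvd (abs_pos.mpr hT0) habs
    have hTm : |T| < Mq m := by
      have h4 : |T| + 1 ≤ (m : ℤ) := by rw [hmz]; have := abs_nonneg k; linarith
      nlinarith [hsm, hMm, hsm1]
    linarith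
  · -- k ≠ 0
    have hkabs : 1 ≤ |k| := Int.one_le_abs hk0
    have hX0 : T - k * sq m ≠ 0 := by
      intro hX
      have : T = k * sq m := by linarith [sub_eq_zero.mp hX]
      have habs : |T| = |k| * sq m := by
        rw [this, abs_mul, abs_of_nonneg (by linarith : (0:ℤ) ≤ sq m)]
      have : |T| + |k| + 1 < sq m := by rw [← hmz]; exact hsm
      nlinarith
    have hXlt : |T - k * sq m| < Mq m := by
      have h1 : |T - k * sq m| ≤ |T| + |k| * sq m := by
        calc |T - k * sq m| ≤ |T| + |k * sq m| := abs_sub _ _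
        _ = |T| + |k| * sq m := by
            rw [abs_mul, abs_of_nonneg (by linarith : (0:ℤ) ≤ sq m)]
      have h2 : |T| + |k| ≤ (m : ℤ) - 1 := by rw [hmz]; linarith
      have h3 : |T| + |k| * sq m < ((m : ℤ) + 1) * sq m := by nlinarith [abs_nonneg T]
      linarith
    have := Int.le_of_dvd (abs_pos.mpr hX0) ((dvd_abs _ _).mpr hdvd)
    linarith

/-! ### The neighbourhood filter and topology on `ℝ × ℤ` -/

/-- basic "neighbourhood of zero" sets. -/
def W (m : ℕ) : Set (ℝ × ℤ) :=
  {p | ∃ l : List ℕ, (∀ i ∈ l, m ≤ i) ∧ (l.length : ℤ) = p.2 ∧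
    p.1 - ((l.map sq).sum : ℤ) ∈ Set.Ico (0:ℝ) (((m : ℝ) + 1)⁻¹)}

lemma eta_pos (m : ℕ) : (0:ℝ) < ((m : ℝ) + 1)⁻¹ := by positivity

lemma eta_le_one (m : ℕ) : ((m : ℝ) + 1)⁻¹ ≤ 1 := by
  rw [inv_le_one_iff₀]
  right
  have : (0:ℝ) ≤ (m:ℝ) := Nat.cast_nonneg m
  linarith

lemma zero_mem_W (m : ℕ) : ((0 : ℝ), (0 : ℤ)) ∈ W m := by
  refine ⟨[], by simp, by simp, ?_⟩
  simp [Set.mem_Ico, eta_pos m]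

lemma W_mono {m m' : ℕ} (h : m ≤ m') : W m' ⊆ W m := by
  rintro p ⟨l, hl, hlen, hico⟩
  refine ⟨l, fun i hi => le_trans h (hl i hi), hlen, ?_⟩
  rcases hico with ⟨h1, h2⟩
  refine ⟨h1, lt_of_lt_of_le h2 ?_⟩
  apply inv_anti₀ (by positivity)
  have : (m:ℝ) ≤ (m':ℝ) := Nat.cast_le.mpr h
  linarith

lemma W_add {m : ℕ} {p q : ℝ × ℤ} (hp : p ∈ W (2*m+1)) (hq : q ∈ W (2*m+1)) :
    p + q ∈ W m := by
  obtain ⟨l, hl, hlen, h1, h2⟩ := hp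
  obtain ⟨l', hl', hlen', h1', h2'⟩ := hq
  refine ⟨l ++ l', ?_, ?_, ?_, ?_⟩
  · intro i hi
    rcases List.mem_append.mp hi with h | h
    · exact le_trans (by omega) (hl i h)
    · exact le_trans (by omega) (hl' i h)
  · show ((l ++ l').length : ℤ) = p.2 + q.2
    rw [List.length_append]; push_cast; rw [hlen, hlen']
  · have hsum : ((((l ++ l').map sq).sum : ℤ) : ℝ)
        = (((l.map sq).sum : ℤ) : ℝ) + (((l'.map sq).sum : ℤ) : ℝ) := by
      rw [List.map_append, List.sum_append]; push_cast; ring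
    show (0:ℝ) ≤ (p + q).1 - ((((l ++ l').map sq).sum : ℤ) : ℝ)
    rw [hsum]
    have hfst : (p + q).1 = p.1 + q.1 := rfl
    rw [hfst]
    linarith
  · have hsum : ((((l ++ l').map sq).sum : ℤ) : ℝ)
        = (((l.map sq).sum : ℤ) : ℝ) + (((l'.map sq).sum : ℤ) : ℝ) := by
      rw [List.map_append, List.sum_append]; push_cast; ring
    show (p + q).1 - ((((l ++ l').map sq).sum : ℤ) : ℝ) < ((m:ℝ) + 1)⁻¹
    rw [hsum]
    have hfst : (p + q).1 = p.1 + q.1 := rfl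
    rw [hfst]
    have hη : (((2*m+1 : ℕ) : ℝ) + 1)⁻¹ = (2 * ((m:ℝ)+1))⁻¹ := by
      rw [show ((2*m+1 : ℕ) : ℝ) + 1 = 2 * ((m:ℝ)+1) by push_cast; ring]
    rw [hη] at h2 h2'
    have hpos : (0:ℝ) < (m:ℝ) + 1 := by positivity
    have hhalf : (2 * ((m:ℝ)+1))⁻¹ + (2 * ((m:ℝ)+1))⁻¹ = ((m:ℝ)+1)⁻¹ := by
      rw [mul_inv]
      ring
    linarith

/-- The topology on `ℝ × ℤ`. -/
def τ : TopologicalSpace (ℝ × ℤ) where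
  IsOpen U := ∀ p ∈ U, ∃ m : ℕ, ∀ w ∈ W m, p + w ∈ U
  isOpen_univ := fun p _ => ⟨0, fun w _ => trivial⟩
  isOpen_inter := by
    intro U V hU hV p hp
    obtain ⟨m1, h1⟩ := hU p hp.1
    obtain ⟨m2, h2⟩ := hV p hp.2
    exact ⟨max m1 m2, fun w hw =>
      ⟨h1 w (W_mono (le_max_left m1 m2) hw), h2 w (W_mono (le_max_right m1 m2) hw)⟩⟩
  isOpen_sUnion := by
    intro S hS p hp
    obtain ⟨U, hU, hpU⟩ := hp
    obtain ⟨m, hm⟩ := hS U hU p hpU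
    exact ⟨m, fun w hw => ⟨U, hU, hm w hw⟩⟩

lemma isOpen_tau_iff {U : Set (ℝ × ℤ)} :
    IsOpen[τ] U ↔ ∀ p ∈ U, ∃ m : ℕ, ∀ w ∈ W m, p + w ∈ U := Iff.rfl

/-- The translate of `W m` at `p`. -/
def P (p : ℝ × ℤ) (m : ℕ) : Set (ℝ × ℤ) := {q | q - p ∈ W m}

lemma mem_P_self (p : ℝ × ℤ) (m : ℕ) : p ∈ P p m := by
  show p - p ∈ W m
  rw [sub_self]
  exact zero_mem_W m

lemma mem_P_iff {p q : ℝ × ℤ} {m : ℕ} : q ∈ P p m ↔ q - p ∈ W m := Iff.rfl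

/-- The open core of `P p m`. -/
def O (p : ℝ × ℤ) (m : ℕ) : Set (ℝ × ℤ) := {z | ∃ m' : ℕ, P z m' ⊆ P p m}

lemma self_mem_O (p : ℝ × ℤ) (m : ℕ) : p ∈ O p m := ⟨m, subset_rfl⟩

lemma O_subset_P (p : ℝ × ℤ) (m : ℕ) : O p m ⊆ P p m := by
  rintro z ⟨m', hm'⟩
  exact hm' (mem_P_self z m')

lemma O_isOpen (p : ℝ × ℤ) (m : ℕ) : IsOpen[τ] (O p m) := by
  rw [isOpen_tau_iff]
  rintro z ⟨m', hm'⟩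
  refine ⟨2*m'+1, fun w hw => ⟨2*m'+1, ?_⟩⟩
  intro q hq
  apply hm'
  show q - z ∈ W m'
  have : q - z = (q - (z + w)) + w := by ring
  rw [this]
  exact W_add hq hw

/-! ### Hausdorff separation -/

lemma abs_sub_int_ge {t : ℝ} (ht : ¬ ∃ T : ℤ, (T : ℝ) = t) (z : ℤ) :
    min (Int.fract t) (1 - Int.fract t) ≤ |t - z| := by
  have hfr : Int.fract t = t - ⌊t⌋ := (Int.self_sub_floor t).symm
  have hf0 : 0 < Int.fract t := by
    rcases lt_or_eq_of_le (Int.fract_nonneg t) with h | h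
    · exact h
    · exfalso; exact ht ⟨⌊t⌋, by rw [hfr] at h; linarith⟩
  have hf1 : Int.fract t < 1 := Int.fract_lt_one t
  rcases le_or_gt (z : ℝ) (⌊t⌋ : ℝ) with h | h
  · have : Int.fract t ≤ t - z := by
      rw [hfr]
      linarith
    calc min (Int.fract t) (1 - Int.fract t) ≤ Int.fract t := min_le_left _ _
      _ ≤ t - z := this
      _ ≤ |t - z| := le_abs_self _
  · have hz : (⌊t⌋ : ℝ) + 1 ≤ z := by
      have : (⌊t⌋ : ℤ) < z := by exact_mod_cast h
      exact_mod_cast this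
    have : 1 - Int.fract t ≤ z - t := by rw [hfr]; linarith
    calc min (Int.fract t) (1 - Int.fract t) ≤ 1 - Int.fract t := min_le_right _ _
      _ ≤ z - t := this
      _ ≤ |t - z| := by rw [abs_sub_comm]; exact le_abs_self _
lemma sep (p q : ℝ × ℤ) (hpq : p ≠ q) :
    ∃ m : ℕ, ∀ r : ℝ × ℤ, r ∈ P p m → r ∈ P q m → False := by
  -- t := q.1 - p.1, k := q.2 - p.2
  by_cases htZ : ∃ T : ℤ, (T : ℝ) = q.1 - p.1
  · obtain ⟨T, hT⟩ := htZ
    set k : ℤ := q.2 - p.2 with hk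
    have hTk : ¬(T = 0 ∧ k = 0) := by
      rintro ⟨h1, h2⟩
      apply hpq
      have e1 : q.1 = p.1 := by
        have hc : (T : ℝ) = 0 := by rw [h1]; norm_num
        rw [hc] at hT; linarith
      have e2 : q.2 = p.2 := by omega
      exact Prod.ext_iff.mpr ⟨e1.symm, e2.symm⟩
    obtain ⟨m, hsep⟩ := int_sep T k hTk
    refine ⟨m, ?_⟩
    rintro r ⟨l, hl, hlen, h1, h2⟩ ⟨l', hl', hlen', h1', h2'⟩
    -- r - p uses list l ; r - q uses list l'
    -- lengths : l.length = r.2 - p.2, l'.length = r.2 - q.2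
    -- so l.length - l'.length = q.2 - p.2 = k
    have hklen : (l.length : ℤ) - (l'.length : ℤ) = k := by
      have e1 : (l.length : ℤ) = r.2 - p.2 := hlen
      have e2 : (l'.length : ℤ) = r.2 - q.2 := hlen'
      rw [e1, e2, hk]; ring
    -- real parts
    set Sl : ℤ := (l.map sq).sum
    set Sl' : ℤ := (l'.map sq).sum
    -- (r.1 - p.1) - Sl ∈ [0, η), (r.1 - q.1) - Sl' ∈ [0, η)
    have hA : (0:ℝ) ≤ (r.1 - p.1) - Sl := h1
    have hB : (r.1 - p.1) - Sl < ((m:ℝ)+1)⁻¹ := h2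
    have hA' : (0:ℝ) ≤ (r.1 - q.1) - Sl' := h1'
    have hB' : (r.1 - q.1) - Sl' < ((m:ℝ)+1)⁻¹ := h2'
    -- subtract : (q.1 - p.1) - (Sl - Sl') ∈ (-η, η)
    have hdiff : |(T : ℝ) - ((Sl - Sl' : ℤ) : ℝ)| < ((m:ℝ)+1)⁻¹ := by
      rw [abs_lt]
      push_cast
      constructor <;> [linarith [hT]; linarith [hT]]
    have hint : T = Sl - Sl' := by
      have hle : |(T : ℝ) - ((Sl - Sl' : ℤ) : ℝ)| < 1 :=
        lt_of_lt_of_le hdiff (eta_le_one m)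
      obtain ⟨hlo, hhi⟩ := abs_lt.mp hle
      have c1 : ((T - (Sl - Sl') : ℤ) : ℝ) < 1 := by push_cast; push_cast at hhi; linarith
      have c2 : (-1 : ℝ) < ((T - (Sl - Sl') : ℤ) : ℝ) := by push_cast; push_cast at hlo; linarith
      have d1 : T - (Sl - Sl') < 1 := by exact_mod_cast c1
      have d2 : (-1 : ℤ) < T - (Sl - Sl') := by exact_mod_cast c2
      omega
    -- apply int_sep with lists l' (as l) and l (as l')
    exact hsep l' l hl' hl hklen (by rw [← hint])
  · -- q.1 - p.1 is not an integer : choose m with η < dist to ℤ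
    set t : ℝ := q.1 - p.1 with htdef
    have hf0 : 0 < min (Int.fract t) (1 - Int.fract t) := by
      have h1 : 0 < Int.fract t := by
        rcases lt_or_eq_of_le (Int.fract_nonneg t) with h | h
        · exact h
        · exfalso
          apply htZ
          refine ⟨⌊t⌋, ?_⟩
          have hfr : Int.fract t = t - ⌊t⌋ := (Int.self_sub_floor t).symm
          rw [hfr] at h
          linarith
      have h2 : Int.fract t < 1 := Int.fract_lt_one t
      simp [lt_min_iff]
      exact ⟨h1, by linarith⟩
    obtain ⟨m, hmgt⟩ := exists_nat_gt (min (Int.fract t) (1 - Int.fract t))⁻¹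
    refine ⟨m, ?_⟩
    rintro r ⟨l, hl, hlen, h1, h2⟩ ⟨l', hl', hlen', h1', h2'⟩
    set Sl : ℤ := (l.map sq).sum
    set Sl' : ℤ := (l'.map sq).sum
    have hA : (0:ℝ) ≤ (r.1 - p.1) - Sl := h1
    have hB : (r.1 - p.1) - Sl < ((m:ℝ)+1)⁻¹ := h2
    have hA' : (0:ℝ) ≤ (r.1 - q.1) - Sl' := h1'
    have hB' : (r.1 - q.1) - Sl' < ((m:ℝ)+1)⁻¹ := h2'
    have hdiff : |t - ((Sl - Sl' : ℤ) : ℝ)| < ((m:ℝ)+1)⁻¹ := by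
      rw [abs_lt]
      push_cast
      constructor <;> [skip; skip] <;> simp only [htdef] <;> linarith
    have hge := abs_sub_int_ge htZ (Sl - Sl')
    have heta : ((m:ℝ)+1)⁻¹ < min (Int.fract t) (1 - Int.fract t) := by
      rw [inv_lt_comm₀ (by positivity) hf0] at *
      · linarith
    linarith

/-! ### the witness pieces -/

def φ₀ : ℝ →+ ℝ × ℤ := AddMonoidHom.inl ℝ ℤ

lemma phi_injective : Function.Injective φ₀ := fun a b h => congrArg Prod.fst h

lemma tau_t2 : @T2Space (ℝ × ℤ) τ := by
  letI := τ
  constructor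
  intro p q hpq
  obtain ⟨m, hm⟩ := sep p q hpq
  refine ⟨O p m, O q m, O_isOpen p m, O_isOpen q m, self_mem_O p m, self_mem_O q m, ?_⟩
  rw [Set.disjoint_left]
  intro r hrp hrq
  exact hm r (O_subset_P p m hrp) (O_subset_P q m hrq)

lemma tau_continuousAdd : @ContinuousAdd (ℝ × ℤ) τ _ := by
  letI := τ
  constructor
  constructor
  intro U hU
  rw [isOpen_prod_iff]
  intro a b hab
  obtain ⟨m, hm⟩ := hU (a + b) hab
  refine ⟨O a (2*m+1), O b (2*m+1), O_isOpen a (2*m+1), O_isOpen b (2*m+1),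
    self_mem_O a (2*m+1), self_mem_O b (2*m+1), ?_⟩
  rintro ⟨z, z'⟩ ⟨hz, hz'⟩
  have h1 : z - a ∈ W (2*m+1) := O_subset_P a (2*m+1) hz
  have h2 : z' - b ∈ W (2*m+1) := O_subset_P b (2*m+1) hz'
  have : z + z' = (a + b) + ((z - a) + (z' - b)) := by ring
  show z + z' ∈ U
  rw [this]
  exact hm _ (W_add h1 h2)

/-- characterization of Sorgenfrey-open sets. -/
lemma sorg_isOpen_iff {u : Set ℝ} :
    IsOpen[sorgenfreyTopology] u ↔ ∀ x ∈ u, ∃ ε > 0, Set.Ico x (x + ε) ⊆ u := by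
  constructor
  · intro h
    induction h with
    | basic s hs =>
      obtain ⟨a, b, rfl⟩ := hs
      intro x hx
      refine ⟨b - x, by linarith [hx.1, hx.2], ?_⟩
      intro y hy
      exact ⟨le_trans hx.1 hy.1, by linarith [hy.2]⟩
    | univ => intro x _; exact ⟨1, one_pos, fun y _ => trivial⟩
    | inter s t _ _ ihs iht =>
      intro x hx
      obtain ⟨ε1, hε1, h1⟩ := ihs x hx.1
      obtain ⟨ε2, hε2, h2⟩ := iht x hx.2
      refine ⟨min ε1 ε2, lt_min hε1 hε2, fun y hy => ⟨?_, ?_⟩⟩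
      · exact h1 ⟨hy.1, lt_of_lt_of_le hy.2 (by simp [min_le_left])⟩
      · exact h2 ⟨hy.1, lt_of_lt_of_le hy.2 (by simp [min_le_right])⟩
    | sUnion S _ ih =>
      intro x hx
      obtain ⟨s, hs, hxs⟩ := hx
      obtain ⟨ε, hε, h⟩ := ih s hs x hxs
      exact ⟨ε, hε, fun y hy => ⟨s, hs, h hy⟩⟩
  · intro h
    letI := sorgenfreyTopology
    choose ε hε hsub using h
    have hu : u = ⋃ x : u, Set.Ico (x : ℝ) ((x : ℝ) + ε x x.2) := by
      ext y
      constructor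
      · intro hy
        exact Set.mem_iUnion.mpr ⟨⟨y, hy⟩, ⟨le_refl y, by linarith [hε y hy]⟩⟩
      · intro hy
        obtain ⟨x, hx⟩ := Set.mem_iUnion.mp hy
        exact hsub x x.2 hx
    rw [hu]
    exact @isOpen_iUnion ℝ _ sorgenfreyTopology _ (fun x =>
      @TopologicalSpace.isOpen_generateFrom_of_mem ℝ _ _
        ⟨(x : ℝ), (x : ℝ) + ε x x.2, rfl⟩)

lemma level0_W {m : ℕ} {x : ℝ} (hx : x ∈ Set.Ico (0:ℝ) (((m:ℝ)+1)⁻¹)) :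
    ((x, (0:ℤ)) : ℝ × ℤ) ∈ W m := by
  refine ⟨[], by simp, by simp, ?_⟩
  simpa using hx

lemma W_level0 {m : ℕ} {x : ℝ} (h : ((x, (0:ℤ)) : ℝ × ℤ) ∈ W m) :
    x ∈ Set.Ico (0:ℝ) (((m:ℝ)+1)⁻¹) := by
  obtain ⟨l, hl, hlen, hico⟩ := h
  have h0 : (l.length : ℤ) = (0 : ℤ) := hlen
  have : l = [] := List.length_eq_zero_iff.mp (by exact_mod_cast h0)
  subst this
  simpa using hico

lemma sorg_eq_induced : sorgenfreyTopology = TopologicalSpace.induced φ₀ τ := by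
  apply TopologicalSpace.ext_iff.mpr
  intro s
  rw [sorg_isOpen_iff]
  rw [@isOpen_induced_iff _ _ τ s φ₀]
  constructor
  · -- sorgenfrey open → induced open
    intro h
    choose ε hε hsub using h
    -- for each x ∈ s pick m x with (m x + 1)⁻¹ < ε x
    have hm : ∀ x (hx : x ∈ s), ∃ m : ℕ, ((m : ℝ) + 1)⁻¹ ≤ ε x hx := by
      intro x hx
      obtain ⟨n, hn⟩ := exists_nat_gt (ε x hx)⁻¹
      refine ⟨n, ?_⟩
      rw [inv_le_comm₀ (by positivity) (hε x hx)]
      linarith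
    choose mfun hmfun using hm
    refine ⟨⋃ x : s, O (φ₀ (x : ℝ)) (mfun x x.2), ?_, ?_⟩
    · letI := τ
      exact isOpen_iUnion fun x => O_isOpen _ _
    · ext y
      simp only [Set.mem_preimage, Set.mem_iUnion]
      constructor
      · rintro ⟨x, hx⟩
        have := O_subset_P _ _ hx
        rw [mem_P_iff] at this
        have hw : ((y - (x:ℝ), (0:ℤ)) : ℝ × ℤ) ∈ W (mfun x x.2) := by
          convert this using 2 <;> simp [φ₀]
        have := W_level0 hw
        apply hsub x x.2
        refine ⟨by linarith [this.1], ?_⟩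
        have h2 := this.2
        have := hmfun x x.2
        linarith
      · intro hy
        exact ⟨⟨y, hy⟩, self_mem_O _ _⟩
  · -- induced open → sorgenfrey open
    rintro ⟨U, hU, rfl⟩
    intro x hx
    obtain ⟨m, hm⟩ := hU (φ₀ x) hx
    refine ⟨((m:ℝ)+1)⁻¹, eta_pos m, ?_⟩
    intro y hy
    have hw : ((y - x, (0:ℤ)) : ℝ × ℤ) ∈ W m :=
      level0_W ⟨by linarith [hy.1], by linarith [hy.2]⟩
    have := hm _ hw
    show φ₀ y ∈ U
    convert this using 1
    simp [φ₀, Prod.ext_iff]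

lemma phi_embedding : @IsEmbedding ℝ (ℝ × ℤ) sorgenfreyTopology τ φ₀ :=
  @IsEmbedding.mk ℝ (ℝ × ℤ) sorgenfreyTopology τ φ₀
    (@IsInducing.mk ℝ (ℝ × ℤ) sorgenfreyTopology τ φ₀ sorg_eq_induced) phi_injective

lemma range_not_closed : ¬ @IsClosed (ℝ × ℤ) τ (Set.range φ₀) := by
  letI := τ
  intro h
  have hopen : IsOpen (Set.range φ₀)ᶜ := h.isOpen_compl
  have hg : ((0:ℝ), (-1:ℤ)) ∈ (Set.range φ₀)ᶜ := by
    rintro ⟨x, hx⟩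
    have : ((x, (0:ℤ)) : ℝ × ℤ) = ((0:ℝ), (-1:ℤ)) := hx
    simp [Prod.ext_iff] at this
  obtain ⟨m, hm⟩ := hopen _ hg
  have hw : (((sq m : ℝ)), (1:ℤ)) ∈ W m := by
    refine ⟨[m], by simp, by simp, ?_⟩
    simp [Set.mem_Ico, eta_pos m]
  have := hm _ hw
  apply this
  exact ⟨(sq m : ℝ), by simp [φ₀, Prod.ext_iff]⟩

end SorgenfreyWitness

/-- The Sorgenfrey line is not H-closed as a paratopological group. -/
theorem sorgenfrey_line_not_H_closed : Nonempty SorgenfreyNotHClosedWitness := by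
  exact ⟨{
    H := ℝ × ℤ
    addGroup := inferInstance
    top := SorgenfreyWitness.τ
    hausdorff := SorgenfreyWitness.tau_t2
    paratopological := SorgenfreyWitness.tau_continuousAdd
    φ := SorgenfreyWitness.φ₀
    injective := SorgenfreyWitness.phi_injective
    embedding := SorgenfreyWitness.phi_embedding
    image_not_closed := SorgenfreyWitness.range_not_closed }⟩
end

section
/- Let T = ℝ/ℤ be the quotient group of the Sorgenfrey line by the subgroup ℤ, endowed with the quotient topology. Then T is an H-closed paratopological group: for every Hausdorff paratopological group H and every injective group homomorphism φ from T into H that is a topological embedding, the image φ(T) is closed in H. -/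
open Topology

/-- The quotient group `ℝ/ℤ` of the Sorgenfrey line by the subgroup `ℤ` of integers. -/
def SorgenfreyCircle : Type := ℝ ⧸ AddSubgroup.zmultiples (1 : ℝ)

instance : AddCommGroup SorgenfreyCircle :=
  inferInstanceAs (AddCommGroup (ℝ ⧸ AddSubgroup.zmultiples (1 : ℝ)))

/-- `SorgenfreyCircle` carries the quotient topology induced by the canonical
projection from the Sorgenfrey line. -/
instance : TopologicalSpace SorgenfreyCircle :=
  TopologicalSpace.coinduced (QuotientAddGroup.mk : ℝ → SorgenfreyCircle) sorgenfreyTopology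

lemma sorg_nhds {O : Set ℝ} (hO : IsOpen[sorgenfreyTopology] O) {a : ℝ} (ha : a ∈ O) :
    ∃ ε > 0, Set.Ico a (a + ε) ⊆ O := by
  have hO' : TopologicalSpace.GenerateOpen {s : Set ℝ | ∃ a b : ℝ, s = Set.Ico a b} O := hO
  clear hO
  revert ha
  induction hO' with
  | basic s hs =>
      intro ha
      obtain ⟨c, d, rfl⟩ := hs
      exact ⟨d - a, by linarith [ha.1, ha.2], fun x hx => ⟨le_trans ha.1 hx.1, by linarith [hx.2]⟩⟩
  | univ => exact fun _ => ⟨1, one_pos, fun x _ => trivial⟩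
  | inter s t _ _ ihs iht =>
      intro ha
      obtain ⟨ε₁, hε₁, h₁⟩ := ihs ha.1
      obtain ⟨ε₂, hε₂, h₂⟩ := iht ha.2
      exact ⟨min ε₁ ε₂, lt_min hε₁ hε₂,
        fun x hx => ⟨h₁ ⟨hx.1, lt_of_lt_of_le hx.2 (by simp)⟩,
                     h₂ ⟨hx.1, lt_of_lt_of_le hx.2 (by simp)⟩⟩⟩
  | sUnion S hS ih =>
      intro ha
      obtain ⟨s, hsS, has⟩ := ha
      obtain ⟨ε, hε, h⟩ := ih s hsS has
      exact ⟨ε, hε, fun x hx => ⟨s, hsS, h hx⟩⟩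

lemma sorg_open_of_open {U : Set ℝ} (hU : IsOpen U) : IsOpen[sorgenfreyTopology] U := by
  have h : ∀ x ∈ U, ∃ ε > 0, Set.Ico x (x + ε) ⊆ U := by
    intro x hx
    obtain ⟨ε, hε, hb⟩ := Metric.isOpen_iff.mp hU x hx
    exact ⟨ε, hε, fun y hy => hb (by
      simp only [Metric.mem_ball, Real.dist_eq, abs_lt]
      constructor <;> [linarith [hy.1]; linarith [hy.2]])⟩
  choose! ε hε hsub using h
  have hUeq : U = ⋃₀ ((fun x => Set.Ico x (x + ε x)) '' U) := by
    ext y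
    constructor
    · intro hy
      exact ⟨Set.Ico y (y + ε y), ⟨y, hy, rfl⟩, ⟨le_refl y, by linarith [hε y hy]⟩⟩
    · rintro ⟨s, ⟨x, hx, rfl⟩, hy⟩
      exact hsub x hx hy
  rw [hUeq]
  exact TopologicalSpace.GenerateOpen.sUnion _ (by rintro s ⟨x, hx, rfl⟩; exact .basic _ ⟨x, _, rfl⟩)

lemma sorg_le : sorgenfreyTopology ≤ (inferInstance : TopologicalSpace ℝ) :=
  fun _U hU => sorg_open_of_open hU

def qS : ℝ → SorgenfreyCircle := QuotientAddGroup.mk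

lemma sorg_mk_add (a b : ℝ) :
    qS (a + b) = qS a + qS b :=
  rfl

lemma quot_nhds (a : ℝ) {U : Set SorgenfreyCircle}
    (hU : U ∈ 𝓝 (qS a)) :
    ∃ ε > 0, ∀ s : ℝ, 0 ≤ s → s < ε → qS (a + s) ∈ U := by
  obtain ⟨O, hOU, hOopen, haO⟩ := mem_nhds_iff.mp hU
  have hpre : IsOpen[sorgenfreyTopology] (qS ⁻¹' O) := isOpen_coinduced.mp hOopen
  have haO' : a ∈ qS ⁻¹' O := haO
  obtain ⟨ε, hε, hsub⟩ := sorg_nhds hpre haO'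
  exact ⟨ε, hε, fun s hs0 hsε => hOU (hsub ⟨by linarith, by linarith⟩)⟩

def toC : SorgenfreyCircle → AddCircle (1 : ℝ) := fun x => x

lemma toC_mk (a : ℝ) : toC (qS a) = (a : AddCircle (1 : ℝ)) := rfl

lemma toC_injective : Function.Injective toC := fun _ _ h => h

lemma toC_continuous : Continuous toC := by
  rw [continuous_iff_coinduced_le]
  show (sorgenfreyTopology.coinduced (QuotientAddGroup.mk : ℝ → SorgenfreyCircle)).coinduced toC ≤ _
  erw [@coinduced_compose ℝ SorgenfreyCircle (AddCircle (1:ℝ)) sorgenfreyTopology _ _]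
  have h1 : (toC ∘ (QuotientAddGroup.mk : ℝ → SorgenfreyCircle)) =
      ((↑) : ℝ → AddCircle (1 : ℝ)) := rfl
  rw [h1]
  calc sorgenfreyTopology.coinduced ((↑) : ℝ → AddCircle (1 : ℝ))
      ≤ (inferInstance : TopologicalSpace ℝ).coinduced ((↑) : ℝ → AddCircle (1 : ℝ)) :=
        coinduced_mono sorg_le
    _ ≤ (inferInstance : TopologicalSpace (AddCircle (1 : ℝ))) := by
        rw [← continuous_iff_coinduced_le]
        exact continuous_quotient_mk'

/-- The quotient `ℝ/ℤ` of the Sorgenfrey line, with the quotient topology, is an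
H-closed paratopological group: for every Hausdorff paratopological group `H` and
every injective group homomorphism `φ` from it into `H` that is a topological
embedding, the image of `φ` is closed in `H`. -/
theorem sorgenfrey_circle_H_closed
    (H : Type*) [AddGroup H] [TopologicalSpace H] [T2Space H] [ContinuousAdd H]
    (φ : SorgenfreyCircle →+ H)
    (hinj : Function.Injective φ)
    (hemb : IsEmbedding (φ : SorgenfreyCircle → H)) :
    IsClosed (Set.range φ) := by
  haveI : Fact ((0:ℝ) < 1) := ⟨zero_lt_one⟩
  apply isClosed_of_closure_subset
  intro h hh
  -- The trace filter of the neighborhoods of h on the circle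
  set F : Filter SorgenfreyCircle := Filter.comap φ (𝓝 h) with hFdef
  haveI hF : F.NeBot := by
    rw [hFdef, Filter.comap_neBot_iff]
    intro N hN
    obtain ⟨y, hy1, t, ht⟩ := mem_closure_iff_nhds.mp hh N hN
    exact ⟨t, ht ▸ hy1⟩
  haveI : (F.map toC).NeBot := hF.map toC
  obtain ⟨g, hg⟩ := exists_clusterPt_of_compactSpace (F.map toC)
  obtain ⟨g', hg'⟩ := QuotientAddGroup.mk_surjective g
  -- we show h = φ (qS g')
  refine ⟨qS g', (eq_of_nhds_neBot ?_).symm⟩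
  have : ClusterPt h (𝓝 (φ (qS g'))) := by
    rw [clusterPt_iff_nonempty]
    intro N hN V hV
    -- neighborhood of qS g' inside V
    have hVmem : φ ⁻¹' V ∈ 𝓝 (qS g') := by
      rw [hemb.toIsInducing.nhds_eq_comap]
      exact Filter.preimage_mem_comap hV
    obtain ⟨ε₁, hε₁, hV'⟩ := quot_nhds g' hVmem
    -- continuity of addition at (h, 0)
    have htend : Filter.Tendsto (fun p : H × H => p.1 + p.2) (𝓝 (h, (0:H))) (𝓝 h) := by
      simpa using continuous_add.tendsto (h, (0:H))
    have hmem : (fun p : H × H => p.1 + p.2) ⁻¹' N ∈ 𝓝 (h, (0:H)) := htend hN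
    rw [nhds_prod_eq] at hmem
    obtain ⟨N', hN', W, hW, hNW⟩ := Filter.mem_prod_iff.mp hmem
    -- neighborhood of 0 in the circle inside W
    have hWmem : φ ⁻¹' W ∈ 𝓝 (qS 0) := by
      rw [hemb.toIsInducing.nhds_eq_comap]
      apply Filter.preimage_mem_comap
      have : φ (qS 0) = 0 := by
        have : qS 0 = 0 := rfl
        rw [this, map_zero]
      rw [this]
      exact hW
    obtain ⟨ε₂, hε₂, hW'⟩ := quot_nhds 0 hWmem
    set δ := min ε₁ ε₂ with hδdef
    have hδ : 0 < δ := lt_min hε₁ hε₂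
    -- a neighborhood of g in the standard circle
    have hopen : IsOpen ((QuotientAddGroup.mk : ℝ → AddCircle (1:ℝ)) ''
        Set.Ioo (g' - δ) (g' + δ)) :=
      QuotientAddGroup.isOpenMap_coe _ isOpen_Ioo
    have hgmem : g ∈ (QuotientAddGroup.mk : ℝ → AddCircle (1:ℝ)) ''
        Set.Ioo (g' - δ) (g' + δ) := ⟨g', ⟨by linarith, by linarith⟩, hg'⟩
    have hnb := hopen.mem_nhds hgmem
    -- a member of the pushed filter
    have hN'' : N' ∩ N ∈ 𝓝 h := Filter.inter_mem hN' hN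
    have hFc : toC '' (φ ⁻¹' (N' ∩ N)) ∈ F.map toC :=
      Filter.image_mem_map (Filter.preimage_mem_comap hN'')
    obtain ⟨y, ⟨r, hr, hrg⟩, t, htN, hty⟩ := clusterPt_iff_nonempty.mp hg hnb hFc
    have htr : t = qS r := by
      apply toC_injective
      rw [hty, toC_mk, hrg]
    rw [htr] at htN
    rcases le_or_gt g' r with hc | hc
    · -- approach from the right: φ (qS r) itself is in N ∩ V
      refine ⟨φ (qS r), htN.2, ?_⟩
      have : qS r = qS (g' + (r - g')) := by rw [add_sub_cancel]
      rw [this]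
      exact hV' (r - g') (by linarith) (by
        have : r < g' + ε₁ := lt_of_lt_of_le hr.2 (by rw [hδdef]; linarith [min_le_left ε₁ ε₂])
        linarith)
    · -- approach from the left: φ (qS g') is in N ∩ V
      refine ⟨φ (qS g'), ?_, mem_of_mem_nhds hV⟩
      have h2 : φ (qS (g' - r)) ∈ W := by
        have := hW' (g' - r) (by linarith) (by
          have : g' - δ < r := hr.1
          have hle : δ ≤ ε₂ := min_le_right ε₁ ε₂
          linarith)
        simpa [zero_add] using this
      have h3 : φ (qS r) + φ (qS (g' - r)) ∈ N := by
        have hp : (φ (qS r), φ (qS (g' - r))) ∈ N' ×ˢ W := ⟨htN.1, h2⟩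
        exact hNW hp
      have h4 : φ (qS r) + φ (qS (g' - r)) = φ (qS g') := by
        rw [← map_add, ← sorg_mk_add]
        congr 1
        ring_nf
      rwa [h4] at h3
  exact this
end
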